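/- The monoid M presented by ⟨a, b, c ∣ a²b = ba², b²a = ab², a²c = ca², b²c = cb², a²b² = c²⟩⁺ is left and right cancellative. -/

import Mathlib

/-- Relations of the presentation `⟨a,b,c ∣ a²b=ba², b²a=ab², a²c=ca², b²c=cb², a²b²=c²⟩`
of the braid group `B₂(Σ_{1,0})`, as elements of the free group on `a = 0`, `b = 1`, `c = 2`. -/
def grels : Set (FreeGroup (Fin 3)) :=
  { FreeGroup.of 0 ^ 2 * FreeGroup.of 1 * (FreeGroup.of 1 * FreeGroup.of 0 ^ 2)⁻¹,
    FreeGroup.of 1 ^ 2 * FreeGroup.of 0 * (FreeGroup.of 0 * FreeGroup.of 1 ^ 2)⁻¹,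
    FreeGroup.of 0 ^ 2 * FreeGroup.of 2 * (FreeGroup.of 2 * FreeGroup.of 0 ^ 2)⁻¹,
    FreeGroup.of 1 ^ 2 * FreeGroup.of 2 * (FreeGroup.of 2 * FreeGroup.of 1 ^ 2)⁻¹,
    FreeGroup.of 0 ^ 2 * FreeGroup.of 1 ^ 2 * (FreeGroup.of 2 ^ 2)⁻¹ }

/-- Relations `a² = b² = c² = 1` of the universal Coxeter group `W(a,b,c)`. -/
def wrels : Set (FreeGroup (Fin 3)) :=
  { FreeGroup.of 0 ^ 2, FreeGroup.of 1 ^ 2, FreeGroup.of 2 ^ 2 }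

/-- The braid group `B₂(Σ_{1,0})` via the presentation above. -/
abbrev G := PresentedGroup grels

/-- The universal Coxeter group `W(a,b,c) = ℤ/2 * ℤ/2 * ℤ/2`. -/
abbrev W := PresentedGroup wrels

def ga : G := PresentedGroup.of 0
def gb : G := PresentedGroup.of 1
def gc : G := PresentedGroup.of 2
def wa : W := PresentedGroup.of 0
def wb : W := PresentedGroup.of 1
def wc : W := PresentedGroup.of 2
/-- The defining relations of the positive monoid presentation
`⟨a,b,c ∣ a²b=ba², b²a=ab², a²c=ca², b²c=cb², a²b²=c²⟩⁺`, on the free monoid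
on `a = 0`, `b = 1`, `c = 2`. -/
inductive mrels : FreeMonoid (Fin 3) → FreeMonoid (Fin 3) → Prop
  | ab : mrels (.of 0 * .of 0 * .of 1) (.of 1 * (.of 0 * .of 0))
  | ba : mrels (.of 1 * .of 1 * .of 0) (.of 0 * (.of 1 * .of 1))
  | ac : mrels (.of 0 * .of 0 * .of 2) (.of 2 * (.of 0 * .of 0))
  | bc : mrels (.of 1 * .of 1 * .of 2) (.of 2 * (.of 1 * .of 1))
  | c2 : mrels (.of 0 * .of 0 * (.of 1 * .of 1)) (.of 2 * .of 2)

/-- The positive monoid `B₂⁺(Σ_{1,0})` given by the presentation above. -/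
abbrev M := PresentedMonoid mrels

def ma : M := PresentedMonoid.of mrels 0
def mb : M := PresentedMonoid.of mrels 1
def mc : M := PresentedMonoid.of mrels 2

namespace B2C

def of' (i : Fin 3) : M := PresentedMonoid.of mrels i

/-- generic induction on `M` -/
theorem gen_ind (P : M → Prop) (h1 : P 1) (hmul : ∀ i x, P x → P (of' i * x)) :
    ∀ x : M, P x := by
  refine fun x => PresentedMonoid.inductionOn x fun w => ?_
  induction w using FreeMonoid.inductionOn' with
  | one => exact h1
  | of_mul b a ih => exact hmul b _ ih

theorem r_ab : of' 0 * of' 0 * of' 1 = of' 1 * (of' 0 * of' 0) :=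
  Quotient.sound (ConGen.Rel.of _ _ mrels.ab)
theorem r_ba : of' 1 * of' 1 * of' 0 = of' 0 * (of' 1 * of' 1) :=
  Quotient.sound (ConGen.Rel.of _ _ mrels.ba)
theorem r_ac : of' 0 * of' 0 * of' 2 = of' 2 * (of' 0 * of' 0) :=
  Quotient.sound (ConGen.Rel.of _ _ mrels.ac)
theorem r_bc : of' 1 * of' 1 * of' 2 = of' 2 * (of' 1 * of' 1) :=
  Quotient.sound (ConGen.Rel.of _ _ mrels.bc)
theorem r_c2 : of' 0 * of' 0 * (of' 1 * of' 1) = of' 2 * of' 2 :=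
  Quotient.sound (ConGen.Rel.of _ _ mrels.c2)

def pa : M := of' 0 * of' 0
def pb : M := of' 1 * of' 1

theorem pa_comm_of : ∀ i : Fin 3, pa * of' i = of' i * pa
  | 0 => by simp only [pa, mul_assoc]
  | 1 => r_ab
  | 2 => r_ac

theorem pb_comm_of : ∀ i : Fin 3, pb * of' i = of' i * pb
  | 0 => r_ba
  | 1 => by simp only [pb, mul_assoc]
  | 2 => r_bc

theorem pa_central : ∀ x : M, pa * x = x * pa := by
  refine gen_ind _ (by simp) (fun i x hx => ?_)
  rw [← mul_assoc, pa_comm_of, mul_assoc, hx, mul_assoc]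

theorem pb_central : ∀ x : M, pb * x = x * pb := by
  refine gen_ind _ (by simp) (fun i x hx => ?_)
  rw [← mul_assoc, pb_comm_of, mul_assoc, hx, mul_assoc]

/-- exponents added by a square of each generator -/
def d1 : Fin 3 → ℕ
  | 0 => 1 | 1 => 0 | 2 => 1
def d2 : Fin 3 → ℕ
  | 0 => 0 | 1 => 1 | 2 => 1

theorem sq_eq : ∀ i : Fin 3, of' i * of' i = pa ^ d1 i * pb ^ d2 i
  | 0 => by simp [pa, d1, d2]
  | 1 => by simp [pb, d1, d2]
  | 2 => by rw [← r_c2]; simp [pa, pb, d1, d2]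

/-- States: two counters and a square-free word (stored as a list). -/
structure St where
  m : ℕ
  n : ℕ
  w : List (Fin 3)
  hw : w.IsChain (· ≠ ·)

theorem St.ext' {s t : St} (hm : s.m = t.m) (hn : s.n = t.n) (hw : s.w = t.w) : s = t := by
  cases s; cases t; simp_all

def step (i : Fin 3) (s : St) : St :=
  match s with
  | ⟨m, n, [], _⟩ => ⟨m, n, [i], List.isChain_singleton i⟩
  | ⟨m, n, j :: t, hw⟩ =>
    if h : j = i then ⟨m + d1 i, n + d2 i, t, hw.tail⟩
    else ⟨m, n, i :: j :: t, List.isChain_cons_cons.mpr ⟨Ne.symm h, hw⟩⟩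

theorem step_nil (i : Fin 3) (m n : ℕ) (h : List.IsChain (· ≠ ·) ([] : List (Fin 3))) :
    step i ⟨m, n, [], h⟩ = ⟨m, n, [i], List.isChain_singleton i⟩ := rfl

theorem step_pop (i : Fin 3) (m n : ℕ) (t : List (Fin 3))
    (hw : List.IsChain (· ≠ ·) (i :: t)) :
    step i ⟨m, n, i :: t, hw⟩ = ⟨m + d1 i, n + d2 i, t, hw.tail⟩ := by
  simp [step]

theorem step_push (i j : Fin 3) (m n : ℕ) (t : List (Fin 3))
    (hw : List.IsChain (· ≠ ·) (j :: t)) (h : ¬ j = i) :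
    step i ⟨m, n, j :: t, hw⟩
      = ⟨m, n, i :: j :: t, List.isChain_cons_cons.mpr ⟨Ne.symm h, hw⟩⟩ := by
  simp [step, h]

def unstep (i : Fin 3) (s : St) : St :=
  if h : s.w.head? = some i then ⟨s.m, s.n, s.w.tail, s.hw.tail⟩
  else ⟨s.m - d1 i, s.n - d2 i, i :: s.w,
    List.isChain_cons.mpr ⟨fun y hy e => h (by subst e; exact hy), s.hw⟩⟩

theorem unstep_step (i : Fin 3) (s : St) : unstep i (step i s) = s := by
  obtain ⟨m, n, w, hw⟩ := s
  match w, hw with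
  | [], _ =>
    rw [step_nil, unstep]
    simp
  | j :: t, hw =>
    by_cases h : j = i
    · subst h
      have ht : ¬ (t.head? = some j) := by
        intro e
        rcases t with _ | ⟨k, t'⟩
        · simp at e
        · simp only [List.head?_cons, Option.some.injEq] at e
          exact (List.isChain_cons_cons.mp hw).1 e.symm
      rw [step_pop, unstep]
      simp only [ht, dif_neg, not_false_iff]
      exact St.ext' (by simp) (by simp) rfl
    · rw [step_push i j m n t hw h, unstep]
      simp

theorem step_inj (i : Fin 3) : Function.Injective (step i) :=
  Function.LeftInverse.injective (unstep_step i)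

def addD (i : Fin 3) (s : St) : St := ⟨s.m + d1 i, s.n + d2 i, s.w, s.hw⟩

theorem step_step (i : Fin 3) (s : St) : step i (step i s) = addD i s := by
  obtain ⟨m, n, w, hw⟩ := s
  match w, hw with
  | [], _ => rw [step_nil, step_pop]; rfl
  | j :: t, hw =>
    by_cases h : j = i
    · subst h
      rw [step_pop]
      rcases t with _ | ⟨k, t'⟩
      · rfl
      · have hk : ¬ (k = j) := fun e => (List.isChain_cons_cons.mp hw).1 e.symm
        rw [step_push j k _ _ t' hw.tail hk]
        rfl
    · rw [step_push i j m n t hw h, step_pop]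
      rfl

theorem step_addD (i j : Fin 3) (s : St) : step i (addD j s) = addD j (step i s) := by
  obtain ⟨m, n, w, hw⟩ := s
  match w, hw with
  | [], h0 =>
    have h1 : addD j ⟨m, n, [], h0⟩ = ⟨m + d1 j, n + d2 j, [], h0⟩ := rfl
    rw [h1, step_nil, step_nil]
    rfl
  | k :: t, hw =>
    have h1 : addD j ⟨m, n, k :: t, hw⟩ = ⟨m + d1 j, n + d2 j, k :: t, hw⟩ := rfl
    by_cases h : k = i
    · subst h
      rw [h1, step_pop, step_pop]
      apply St.ext' <;> simp [addD] <;> omega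
    · rw [h1, step_push i k _ _ t hw h, step_push i k _ _ t hw h]
      rfl

theorem addD_addD (s : St) : addD 0 (addD 1 s) = addD 2 s := by
  apply St.ext' <;> simp [addD, d1, d2]

def F (i : Fin 3) : Function.End St := step i

/-- The action homomorphism. -/
def A : M →* Function.End St :=
  PresentedMonoid.lift F (by
    intro a b r
    cases r
    · show F 0 * F 0 * F 1 = F 1 * (F 0 * F 0)
      funext s
      show step 0 (step 0 (step 1 s)) = step 1 (step 0 (step 0 s))
      rw [step_step, step_step, step_addD]
    · show F 1 * F 1 * F 0 = F 0 * (F 1 * F 1)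
      funext s
      show step 1 (step 1 (step 0 s)) = step 0 (step 1 (step 1 s))
      rw [step_step, step_step, step_addD]
    · show F 0 * F 0 * F 2 = F 2 * (F 0 * F 0)
      funext s
      show step 0 (step 0 (step 2 s)) = step 2 (step 0 (step 0 s))
      rw [step_step, step_step, step_addD]
    · show F 1 * F 1 * F 2 = F 2 * (F 1 * F 1)
      funext s
      show step 1 (step 1 (step 2 s)) = step 2 (step 1 (step 1 s))
      rw [step_step, step_step, step_addD]
    · show F 0 * F 0 * (F 1 * F 1) = F 2 * F 2
      funext s
      show step 0 (step 0 (step 1 (step 1 s))) = step 2 (step 2 s)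
      rw [step_step, step_step, step_step, addD_addD])

theorem A_of (i : Fin 3) (s : St) : A (of' i) s = step i s := rfl

theorem A_mul (x y : M) (s : St) : A (x * y) s = A x (A y s) := by
  rw [map_mul]; rfl

theorem A_inj : ∀ x : M, Function.Injective (A x) := by
  refine gen_ind _ (fun s t h => ?_) (fun i x hx s t h => ?_)
  · exact h
  · rw [A_mul, A_mul, A_of, A_of] at h
    exact hx (step_inj i h)

/-- word product -/
def wprod : List (Fin 3) → M
  | [] => 1
  | i :: t => of' i * wprod t

def gst (s : St) : M := wprod s.w * (pa ^ s.m * pb ^ s.n)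

theorem central_pow (u : M) (k l : ℕ) : pa ^ k * pb ^ l * u = u * (pa ^ k * pb ^ l) := by
  have h1 : pa ^ k * u = u * pa ^ k := (Commute.pow_left (pa_central u) k).eq
  have h2 : pb ^ l * u = u * pb ^ l := (Commute.pow_left (pb_central u) l).eq
  rw [mul_assoc, h2, ← mul_assoc, h1, mul_assoc]

theorem pow_merge (k l k' l' : ℕ) :
    pa ^ k * pb ^ l * (pa ^ k' * pb ^ l') = pa ^ (k + k') * pb ^ (l + l') := by
  have h : pb ^ l * pa ^ k' = pa ^ k' * pb ^ l :=
    (Commute.pow_pow (show Commute pb pa from pb_central pa) l k').eq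
  calc pa ^ k * pb ^ l * (pa ^ k' * pb ^ l')
      = pa ^ k * (pb ^ l * pa ^ k') * pb ^ l' := by simp only [mul_assoc]
    _ = pa ^ k * (pa ^ k' * pb ^ l) * pb ^ l' := by rw [h]
    _ = pa ^ (k + k') * pb ^ (l + l') := by simp only [pow_add, mul_assoc]

theorem gst_step (i : Fin 3) (s : St) : gst (step i s) = of' i * gst s := by
  obtain ⟨m, n, w, hw⟩ := s
  match w, hw with
  | [], _ =>
    rw [step_nil]
    show of' i * 1 * (pa ^ m * pb ^ n) = of' i * (1 * (pa ^ m * pb ^ n))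
    rw [mul_one, one_mul]
  | j :: t, hw =>
    by_cases h : j = i
    · subst h
      rw [step_pop]
      show wprod t * (pa ^ (m + d1 j) * pb ^ (n + d2 j))
        = of' j * (of' j * wprod t * (pa ^ m * pb ^ n))
      rw [← mul_assoc (of' j) (of' j * wprod t) (pa ^ m * pb ^ n),
        ← mul_assoc (of' j) (of' j) (wprod t), sq_eq j,
        central_pow (wprod t) (d1 j) (d2 j), mul_assoc (wprod t), pow_merge,
        Nat.add_comm (d1 j) m, Nat.add_comm (d2 j) n]
    · rw [step_push i j m n t hw h]
      show of' i * wprod (j :: t) * (pa ^ m * pb ^ n)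
        = of' i * (wprod (j :: t) * (pa ^ m * pb ^ n))
      rw [mul_assoc]

theorem A_gst : ∀ x : M, ∀ s : St, gst (A x s) = x * gst s := by
  refine gen_ind _ (fun s => ?_) (fun i x hx s => ?_)
  · rw [map_one, one_mul]; rfl
  · rw [A_mul, A_of, gst_step, hx, mul_assoc]

def s0 : St := ⟨0, 0, [], List.isChain_nil⟩

theorem gst_s0 : gst s0 = 1 := by
  show (1 : M) * (pa ^ 0 * pb ^ 0) = 1
  simp

theorem left_cancel (h g₁ g₂ : M) (e : h * g₁ = h * g₂) : g₁ = g₂ := by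
  have e1 : A h (A g₁ s0) = A h (A g₂ s0) := by
    rw [← A_mul, ← A_mul, e]
  have e2 : A g₁ s0 = A g₂ s0 := A_inj h e1
  have e3 := congrArg gst e2
  rwa [A_gst, A_gst, gst_s0, mul_one, mul_one] at e3

/-- reversal anti-homomorphism -/
def rev : M →* Mᵐᵒᵖ :=
  PresentedMonoid.lift (fun i => MulOpposite.op (of' i)) (by
    intro a b r
    cases r
    · show MulOpposite.op (of' 0) * MulOpposite.op (of' 0) * MulOpposite.op (of' 1)
        = MulOpposite.op (of' 1) * (MulOpposite.op (of' 0) * MulOpposite.op (of' 0))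
      simp only [← MulOpposite.op_mul, MulOpposite.op_inj]
      exact r_ab.symm
    · show MulOpposite.op (of' 1) * MulOpposite.op (of' 1) * MulOpposite.op (of' 0)
        = MulOpposite.op (of' 0) * (MulOpposite.op (of' 1) * MulOpposite.op (of' 1))
      simp only [← MulOpposite.op_mul, MulOpposite.op_inj]
      exact r_ba.symm
    · show MulOpposite.op (of' 0) * MulOpposite.op (of' 0) * MulOpposite.op (of' 2)
        = MulOpposite.op (of' 2) * (MulOpposite.op (of' 0) * MulOpposite.op (of' 0))
      simp only [← MulOpposite.op_mul, MulOpposite.op_inj]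
      exact r_ac.symm
    · show MulOpposite.op (of' 1) * MulOpposite.op (of' 1) * MulOpposite.op (of' 2)
        = MulOpposite.op (of' 2) * (MulOpposite.op (of' 1) * MulOpposite.op (of' 1))
      simp only [← MulOpposite.op_mul, MulOpposite.op_inj]
      exact r_bc.symm
    · show MulOpposite.op (of' 0) * MulOpposite.op (of' 0)
          * (MulOpposite.op (of' 1) * MulOpposite.op (of' 1))
        = MulOpposite.op (of' 2) * MulOpposite.op (of' 2)
      simp only [← MulOpposite.op_mul, MulOpposite.op_inj]
      show pb * pa = of' 2 * of' 2
      rw [← pa_central pb]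
      exact r_c2)

def ρ (x : M) : M := (rev x).unop

theorem ρ_mul (x y : M) : ρ (x * y) = ρ y * ρ x := by
  show (rev (x * y)).unop = _
  rw [map_mul]
  rfl

theorem ρ_of (i : Fin 3) : ρ (of' i) = of' i := rfl

theorem ρ_one : ρ 1 = 1 := by
  show (rev 1).unop = 1
  rw [map_one]
  rfl

theorem ρρ : ∀ x : M, ρ (ρ x) = x := by
  refine gen_ind _ (by rw [ρ_one, ρ_one]) (fun i x hx => ?_)
  rw [ρ_mul, ρ_of, ρ_mul, ρ_of, hx]

theorem right_cancel (h g₁ g₂ : M) (e : g₁ * h = g₂ * h) : g₁ = g₂ := by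
  have e1 : ρ h * ρ g₁ = ρ h * ρ g₂ := by
    rw [← ρ_mul, ← ρ_mul, e]
  have e2 := left_cancel _ _ _ e1
  have e3 := congrArg ρ e2
  rwa [ρρ, ρρ] at e3

end B2C

theorem stmt_16 :
    (∀ h g₁ g₂ : M, h * g₁ = h * g₂ → g₁ = g₂) ∧
    (∀ h g₁ g₂ : M, g₁ * h = g₂ * h → g₁ = g₂) := ⟨B2C.left_cancel, B2C.right_cancel⟩
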